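/- Strong shift equivalence implies shift equivalence: if A and B are strong shift equivalent (related by a chain of elementary shift relations), then A and B are shift equivalent. -/
import Mathlib


open Matrix

/-- Elementary shift relation: `A = RS` and `B = SR` for some rectangular `ℕ`-matrices. -/
def ElementaryShift (p q : Σ n : ℕ, Matrix (Fin n) (Fin n) ℕ) : Prop :=
  ∃ (R : Matrix (Fin p.1) (Fin q.1) ℕ) (S : Matrix (Fin q.1) (Fin p.1) ℕ),
    p.2 = R * S ∧ q.2 = S * R

/-- Strong shift equivalence: the transitive closure of elementary shift relation. -/
def StrongShiftEquiv : (Σ n : ℕ, Matrix (Fin n) (Fin n) ℕ) →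
    (Σ n : ℕ, Matrix (Fin n) (Fin n) ℕ) → Prop :=
  Relation.TransGen ElementaryShift

/-- Shift equivalence of square matrices over `ℕ`. -/
def ShiftEquiv (p q : Σ n : ℕ, Matrix (Fin n) (Fin n) ℕ) : Prop :=
  ∃ m : ℕ, 1 ≤ m ∧ ∃ (R : Matrix (Fin p.1) (Fin q.1) ℕ) (S : Matrix (Fin q.1) (Fin p.1) ℕ),
    p.2 ^ m = R * S ∧ q.2 ^ m = S * R ∧ q.2 * S = S * p.2 ∧ p.2 * R = R * q.2


private lemma intertwine_pow {a b : ℕ} (A : Matrix (Fin a) (Fin a) ℕ)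
    (B : Matrix (Fin b) (Fin b) ℕ) (R : Matrix (Fin a) (Fin b) ℕ)
    (h : A * R = R * B) : ∀ n : ℕ, A ^ n * R = R * B ^ n := by
  intro n
  induction n with
  | zero => simp
  | succ k ih =>
    rw [pow_succ, pow_succ, Matrix.mul_assoc, h, ← Matrix.mul_assoc, ih, Matrix.mul_assoc]

private lemma elem_imp_shift (p q : Σ n : ℕ, Matrix (Fin n) (Fin n) ℕ)
    (h : ElementaryShift p q) : ShiftEquiv p q := by
  obtain ⟨R, S, hA, hB⟩ := h
  exact ⟨1, le_refl 1, R, S, by simpa using hA, by simpa using hB,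
    by rw [hA, hB, Matrix.mul_assoc], by rw [hA, hB, Matrix.mul_assoc]⟩

private lemma shift_trans (p q r : Σ n : ℕ, Matrix (Fin n) (Fin n) ℕ)
    (h1 : ShiftEquiv p q) (h2 : ShiftEquiv q r) : ShiftEquiv p r := by
  obtain ⟨m, hm, R1, S1, hA1, hB1, hS1, hR1⟩ := h1
  obtain ⟨n, hn, R2, S2, hB2, hC2, hS2, hR2⟩ := h2
  refine ⟨m + n, le_trans hm (Nat.le_add_right m n), R1 * R2, S2 * S1, ?_, ?_, ?_, ?_⟩
  · calc p.2 ^ (m + n) = p.2 ^ n * p.2 ^ m := by rw [← pow_add, Nat.add_comm]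
      _ = p.2 ^ n * (R1 * S1) := by rw [hA1]
      _ = (R1 * q.2 ^ n) * S1 := by rw [← intertwine_pow _ _ _ hR1, Matrix.mul_assoc]
      _ = R1 * (R2 * S2) * S1 := by rw [hB2]
      _ = R1 * R2 * (S2 * S1) := by rw [Matrix.mul_assoc, Matrix.mul_assoc, Matrix.mul_assoc]
  · calc r.2 ^ (m + n) = r.2 ^ n * r.2 ^ m := by rw [← pow_add, Nat.add_comm]
      _ = (S2 * R2) * r.2 ^ m := by rw [hC2]
      _ = S2 * (q.2 ^ m * R2) := by rw [intertwine_pow _ _ _ hR2, Matrix.mul_assoc]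
      _ = S2 * ((S1 * R1) * R2) := by rw [hB1]
      _ = S2 * S1 * (R1 * R2) := by rw [Matrix.mul_assoc, Matrix.mul_assoc]
  · calc r.2 * (S2 * S1) = (r.2 * S2) * S1 := by rw [Matrix.mul_assoc]
      _ = S2 * (q.2 * S1) := by rw [hS2, Matrix.mul_assoc]
      _ = S2 * S1 * p.2 := by rw [hS1, Matrix.mul_assoc]
  · calc p.2 * (R1 * R2) = (p.2 * R1) * R2 := by rw [Matrix.mul_assoc]
      _ = R1 * (q.2 * R2) := by rw [hR1, Matrix.mul_assoc]
      _ = R1 * R2 * r.2 := by rw [hR2, Matrix.mul_assoc]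

/-- Strong shift equivalence implies shift equivalence. -/
theorem strongShiftEquiv_imp_shiftEquiv (p q : Σ n : ℕ, Matrix (Fin n) (Fin n) ℕ)
    (h : StrongShiftEquiv p q) : ShiftEquiv p q := by
  induction h with
  | single h => exact elem_imp_shift _ _ h
  | tail _ h ih => exact shift_trans _ _ _ ih (elem_imp_shift _ _ h)
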